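/- Let 0 ≤ h ∈ L¹(a,b) with h ≢ 0 and let v ∈ C¹([a,b]) be the solution of −(φ(v'))' = h in (a,b), v(a) = v(b) = 0. Then v(x) ≥ θ̲_h · (sup_{[a,b]} |v|) · δ_Ω(x) for all x ∈ [a,b]. -/

import Mathlib

open MeasureTheory Set Filter

/-- `φ` is an odd increasing homeomorphism of `ℝ`. -/
def OddIncHomeo (φ : ℝ → ℝ) : Prop :=
  StrictMono φ ∧ Continuous φ ∧ Function.Surjective φ ∧ ∀ x, φ (-x) = -φ x

/-- `v` is `C¹` on `[a,b]` with derivative `v'`. -/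
def C1On (v v' : ℝ → ℝ) (a b : ℝ) : Prop :=
  ContinuousOn v (Icc a b) ∧ ContinuousOn v' (Icc a b) ∧
  ∀ x ∈ Icc a b, HasDerivWithinAt v (v' x) (Icc a b) x

/-- `v` (with derivative `v'`) is a solution of `-(φ(v'))' = h` in `(a,b)`,
`v(a) = v(b) = 0`. -/
def IsSolutionH (φ h : ℝ → ℝ) (a b : ℝ) (v v' : ℝ → ℝ) : Prop :=
  C1On v v' a b ∧ v a = 0 ∧ v b = 0 ∧
  ∀ x ∈ Icc a b, φ (v' x) = φ (v' a) - ∫ s in a..x, h s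

/-- `α_h = sup 𝒜_h` where `𝒜_h = {x ∈ (a,b) : h = 0 a.e. on (a,x)}`, with
`α_h = a` if `𝒜_h = ∅`. -/
noncomputable def alphaH (h : ℝ → ℝ) (a b : ℝ) : ℝ :=
  sSup ({x | x ∈ Ioo a b ∧ ∀ᵐ y ∂(volume : Measure ℝ), y ∈ Ioo a x → h y = 0} ∪ {a})

/-- `β_h = inf ℬ_h` where `ℬ_h = {x ∈ (a,b) : h = 0 a.e. on (x,b)}`, with
`β_h = b` if `ℬ_h = ∅`. -/
noncomputable def betaH (h : ℝ → ℝ) (a b : ℝ) : ℝ :=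
  sInf ({x | x ∈ Ioo a b ∧ ∀ᵐ y ∂(volume : Measure ℝ), y ∈ Ioo x b → h y = 0} ∪ {b})

/-- `θ̲_h = min {1/(β_h - a), 1/(b - α_h)}`. -/
noncomputable def thetaLow (h : ℝ → ℝ) (a b : ℝ) : ℝ :=
  min (1 / (betaH h a b - a)) (1 / (b - alphaH h a b))

/-- `θ̄_h = (α_h + β_h)/2`. -/
noncomputable def thetaBar (h : ℝ → ℝ) (a b : ℝ) : ℝ :=
  (alphaH h a b + betaH h a b) / 2

/-- `δ_Ω(x) = min (x - a, b - x)`. -/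
noncomputable def deltaOmega (a b x : ℝ) : ℝ := min (x - a) (b - x)

lemma ae_ne_pt (c : ℝ) : ∀ᵐ x ∂(volume : Measure ℝ), x ≠ c := by
  simp only [ae_iff, ne_eq, not_not, Set.setOf_eq_eq_singleton]
  exact Real.volume_singleton

theorem lower_bound_by_sup_norm
    (a b : ℝ) (hab : a < b) (φ : ℝ → ℝ) (hφ : OddIncHomeo φ)
    (h : ℝ → ℝ) (hh : IntegrableOn h (Icc a b))
    (hh0 : ∀ᵐ x ∂(volume : Measure ℝ), x ∈ Ioo a b → 0 ≤ h x)
    (hhne : ¬ (∀ᵐ x ∂(volume : Measure ℝ), x ∈ Ioo a b → h x = 0))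
    (v v' : ℝ → ℝ) (hv : IsSolutionH φ h a b v v') :
    ∀ x ∈ Icc a b,
      thetaLow h a b * sSup ((fun y => |v y|) '' Icc a b) * deltaOmega a b x ≤ v x := by
  obtain ⟨hmono, hcφ, hsurj, hodd⟩ := hφ
  obtain ⟨⟨hvc, hv'c, hvd⟩, hva, hvb, heq⟩ := hv
  set α := alphaH h a b with hαdef
  set β := betaH h a b with hβdef
  have haMem : a ∈ ({x | x ∈ Ioo a b ∧ ∀ᵐ y ∂(volume : Measure ℝ), y ∈ Ioo a x → h y = 0} ∪ {a}) :=
    Set.mem_union_right _ rfl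
  have hbMem : b ∈ ({x | x ∈ Ioo a b ∧ ∀ᵐ y ∂(volume : Measure ℝ), y ∈ Ioo x b → h y = 0} ∪ {b}) :=
    Set.mem_union_right _ rfl
  have hαbddA : BddAbove ({x | x ∈ Ioo a b ∧ ∀ᵐ y ∂(volume : Measure ℝ), y ∈ Ioo a x → h y = 0} ∪ {a}) := by
    refine ⟨b, ?_⟩
    rintro z (hz | hz)
    · exact hz.1.2.le
    · rw [Set.mem_singleton_iff] at hz; rw [hz]; exact hab.le
  have hβbddB : BddBelow ({x | x ∈ Ioo a b ∧ ∀ᵐ y ∂(volume : Measure ℝ), y ∈ Ioo x b → h y = 0} ∪ {b}) := by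
    refine ⟨a, ?_⟩
    rintro z (hz | hz)
    · exact hz.1.1.le
    · rw [Set.mem_singleton_iff] at hz; rw [hz]; exact hab.le
  have haα : a ≤ α := le_csSup hαbddA haMem
  have hαb' : α ≤ b := csSup_le ⟨a, haMem⟩ (by
    rintro z (hz | hz)
    · exact hz.1.2.le
    · rw [Set.mem_singleton_iff] at hz; rw [hz]; exact hab.le)
  have hβb : β ≤ b := csInf_le hβbddB hbMem
  have haβ' : a ≤ β := le_csInf ⟨b, hbMem⟩ (by
    rintro z (hz | hz)
    · exact hz.1.1.le
    · rw [Set.mem_singleton_iff] at hz; rw [hz]; exact hab.le)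
  -- h = 0 a.e. on (a, α)
  have C1 : ∀ᵐ y ∂(volume : Measure ℝ), y ∈ Ioo a α → h y = 0 := by
    have key : ∀ q : ℚ, ∀ᵐ y ∂(volume : Measure ℝ), ((q : ℝ) < α ∧ y ∈ Ioo a (q : ℝ)) → h y = 0 := by
      intro q
      by_cases hq : (q : ℝ) < α
      · obtain ⟨z, hz, hqz⟩ := exists_lt_of_lt_csSup ⟨a, haMem⟩ hq
        rcases hz with hz | hz
        · refine hz.2.mono fun y hy hy2 => hy ⟨hy2.2.1, hy2.2.2.trans hqz⟩
        · rw [Set.mem_singleton_iff] at hz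
          refine Eventually.of_forall fun y hy2 => absurd (hy2.2.1.trans hy2.2.2) ?_
          rw [hz] at hqz; exact not_lt.2 hqz.le
      · exact Eventually.of_forall fun y hy => absurd hy.1 hq
    filter_upwards [ae_all_iff.2 key] with y hy hmem
    obtain ⟨q, hq1, hq2⟩ := exists_rat_btwn hmem.2
    exact hy q ⟨hq2, hmem.1, hq1⟩
  -- h = 0 a.e. on (β, b)
  have C2 : ∀ᵐ y ∂(volume : Measure ℝ), y ∈ Ioo β b → h y = 0 := by
    have key : ∀ q : ℚ, ∀ᵐ y ∂(volume : Measure ℝ), (β < (q : ℝ) ∧ y ∈ Ioo (q : ℝ) b) → h y = 0 := by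
      intro q
      by_cases hq : β < (q : ℝ)
      · obtain ⟨z, hz, hzq⟩ := exists_lt_of_csInf_lt ⟨b, hbMem⟩ hq
        rcases hz with hz | hz
        · refine hz.2.mono fun y hy hy2 => hy ⟨hzq.trans hy2.2.1, hy2.2.2⟩
        · rw [Set.mem_singleton_iff] at hz
          refine Eventually.of_forall fun y hy2 => absurd (hy2.2.1.trans hy2.2.2) ?_
          rw [hz] at hzq; exact not_lt.2 hzq.le
      · exact Eventually.of_forall fun y hy => absurd hy.1 hq
    filter_upwards [ae_all_iff.2 key] with y hy hmem
    obtain ⟨q, hq1, hq2⟩ := exists_rat_btwn hmem.1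
    exact hy q ⟨hq1, hq2, hmem.2⟩
  have haβ : a < β := by
    by_contra h'
    push_neg at h'
    exact hhne (C2.mono fun y hy hmem => hy ⟨h'.trans_lt hmem.1, hmem.2⟩)
  have hαb : α < b := by
    by_contra h'
    push_neg at h'
    exact hhne (C1.mono fun y hy hmem => hy ⟨hmem.1, hmem.2.trans_le h'⟩)
  have hαβ : α < β := by
    by_contra h'
    push_neg at h'
    apply hhne
    filter_upwards [C1, C2, ae_ne_pt α] with y h1 h2 hne hmem
    rcases lt_or_ge y α with hy | hy
    · exact h1 ⟨hmem.1, hy⟩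
    · exact h2 ⟨h'.trans_lt (lt_of_le_of_ne hy (Ne.symm hne)), hmem.2⟩
  -- integrability
  have hint : ∀ x ∈ Icc a b, ∀ y ∈ Icc a b, IntervalIntegrable h volume x y := by
    intro x hx y hy
    rw [intervalIntegrable_iff]
    exact hh.mono_set ((Set.uIoc_subset_uIcc).trans (Set.uIcc_subset_Icc hx hy))
  have hint0 : ∀ x ∈ Icc a b, ∀ y ∈ Icc a b, x ≤ y → 0 ≤ ∫ s in x..y, h s := by
    intro x hx y hy hxy
    apply intervalIntegral.integral_nonneg_of_ae_restrict hxy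
    rw [Filter.EventuallyLE, ae_restrict_iff' measurableSet_Icc]
    filter_upwards [hh0, ae_ne_pt a, ae_ne_pt b] with s hs hsa hsb hmem
    exact hs ⟨lt_of_le_of_ne (hx.1.trans hmem.1) (Ne.symm hsa),
      lt_of_le_of_ne (hmem.2.trans hy.2) hsb⟩
  have hamem : a ∈ Icc a b := left_mem_Icc.2 hab.le
  have hbmem : b ∈ Icc a b := right_mem_Icc.2 hab.le
  -- v' antitone
  have hanti : AntitoneOn v' (Icc a b) := by
    intro x hx y hy hxy
    have h3 : (∫ s in a..y, h s) = (∫ s in a..x, h s) + ∫ s in x..y, h s :=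
      (intervalIntegral.integral_add_adjacent_intervals (hint a hamem x hx) (hint x hx y hy)).symm
    have h4 := hint0 x hx y hy hxy
    have : φ (v' y) ≤ φ (v' x) := by
      rw [heq x hx, heq y hy, h3]; linarith
    exact hmono.le_iff_le.1 this
  have hdAt : ∀ x ∈ Ioo a b, HasDerivAt v (v' x) x := fun x hx =>
    (hvd x (Ioo_subset_Icc_self hx)).hasDerivAt (Icc_mem_nhds hx.1 hx.2)
  have hderiv : ∀ x ∈ Ioo a b, deriv v x = v' x := fun x hx => (hdAt x hx).deriv
  -- concavity
  have hconc : ConcaveOn ℝ (Icc a b) v := by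
    apply AntitoneOn.concaveOn_of_deriv (convex_Icc a b) hvc
    · intro x hx
      rw [interior_Icc] at hx
      exact (hdAt x hx).differentiableAt.differentiableWithinAt
    · intro x hx y hy hxy
      rw [interior_Icc] at hx hy
      rw [hderiv x hx, hderiv y hy]
      exact hanti (Ioo_subset_Icc_self hx) (Ioo_subset_Icc_self hy) hxy
  -- nonnegativity
  have hv0 : ∀ x ∈ Icc a b, 0 ≤ v x := by
    intro x hx
    have hba : (0:ℝ) < b - a := sub_pos.2 hab
    have ht : (0:ℝ) ≤ (b - x) / (b - a) := div_nonneg (sub_nonneg.2 hx.2) hba.le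
    have hs : (0:ℝ) ≤ (x - a) / (b - a) := div_nonneg (sub_nonneg.2 hx.1) hba.le
    have hts : (b - x) / (b - a) + (x - a) / (b - a) = 1 := by field_simp; ring
    have := hconc.2 hamem hbmem ht hs hts
    have hxx : ((b - x) / (b - a)) • a + ((x - a) / (b - a)) • b = x := by
      simp only [smul_eq_mul]; field_simp; ring
    rw [hxx, hva, hvb] at this
    simpa using this
  -- v' a ≥ 0 and v' b ≤ 0
  have hv'a : 0 ≤ v' a := by
    by_contra hneg
    push_neg at hneg
    have hsa : StrictAntiOn v (Icc a b) := by
      apply strictAntiOn_of_deriv_neg (convex_Icc a b) hvc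
      intro x hx
      rw [interior_Icc] at hx
      rw [hderiv x hx]
      exact lt_of_le_of_lt (hanti hamem (Ioo_subset_Icc_self hx) hx.1.le) hneg
    have := hsa hamem hbmem hab
    rw [hva, hvb] at this; exact lt_irrefl 0 this
  have hv'b : v' b ≤ 0 := by
    by_contra hneg
    push_neg at hneg
    have hsa : StrictMonoOn v (Icc a b) := by
      apply strictMonoOn_of_deriv_pos (convex_Icc a b) hvc
      intro x hx
      rw [interior_Icc] at hx
      rw [hderiv x hx]
      exact lt_of_lt_of_le hneg (hanti (Ioo_subset_Icc_self hx) hbmem hx.2.le)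
    have := hsa hamem hbmem hab
    rw [hva, hvb] at this; exact lt_irrefl 0 this
  -- zero integrals on the flat parts
  have hIa : ∀ x ∈ Icc a α, (∫ s in a..x, h s) = 0 := by
    intro x hx
    rw [intervalIntegral.integral_of_le hx.1]
    rw [setIntegral_congr_ae measurableSet_Ioc
      (g := fun _ => (0:ℝ)) ?_, integral_zero]
    filter_upwards [C1, ae_ne_pt α] with s hs hsα hmem
    exact hs ⟨hmem.1, lt_of_le_of_ne (hmem.2.trans hx.2) hsα⟩
  have hIb : ∀ x ∈ Icc β b, (∫ s in x..b, h s) = 0 := by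
    intro x hx
    rw [intervalIntegral.integral_of_le hx.2]
    rw [setIntegral_congr_ae measurableSet_Ioc
      (g := fun _ => (0:ℝ)) ?_, integral_zero]
    filter_upwards [C2, ae_ne_pt b] with s hs hsb hmem
    exact hs ⟨hx.1.trans_lt hmem.1, lt_of_le_of_ne hmem.2 hsb⟩
  -- v' constant on the flat parts
  have hv'l : ∀ x ∈ Icc a α, v' x = v' a := by
    intro x hx
    have hx' : x ∈ Icc a b := ⟨hx.1, hx.2.trans hαb.le⟩
    apply hmono.injective
    rw [heq x hx', hIa x hx, sub_zero]
  have hv'r : ∀ x ∈ Icc β b, v' x = v' b := by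
    intro x hx
    have hx' : x ∈ Icc a b := ⟨haβ.le.trans hx.1, hx.2⟩
    have h3 : (∫ s in a..b, h s) = (∫ s in a..x, h s) + ∫ s in x..b, h s :=
      (intervalIntegral.integral_add_adjacent_intervals (hint a hamem x hx') (hint x hx' b hbmem)).symm
    apply hmono.injective
    rw [heq x hx', heq b hbmem, h3, hIb x hx]; ring
  -- v monotone on [a,α], antitone on [β,b]
  have hml : MonotoneOn v (Icc a α) := by
    apply monotoneOn_of_deriv_nonneg (convex_Icc a α) (hvc.mono (Icc_subset_Icc le_rfl hαb.le))
    · intro x hx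
      rw [interior_Icc] at hx
      have hx' : x ∈ Ioo a b := ⟨hx.1, hx.2.trans_le hαb.le⟩
      exact (hdAt x hx').differentiableAt.differentiableWithinAt
    · intro x hx
      rw [interior_Icc] at hx
      have hx' : x ∈ Ioo a b := ⟨hx.1, hx.2.trans_le hαb.le⟩
      rw [hderiv x hx', hv'l x (Ioo_subset_Icc_self hx)]
      exact hv'a
  have hmr : AntitoneOn v (Icc β b) := by
    apply antitoneOn_of_deriv_nonpos (convex_Icc β b) (hvc.mono (Icc_subset_Icc haβ.le le_rfl))
    · intro x hx
      rw [interior_Icc] at hx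
      have hx' : x ∈ Ioo a b := ⟨haβ.trans_le hx.1.le, hx.2⟩
      exact (hdAt x hx').differentiableAt.differentiableWithinAt
    · intro x hx
      rw [interior_Icc] at hx
      have hx' : x ∈ Ioo a b := ⟨haβ.trans_le hx.1.le, hx.2⟩
      rw [hderiv x hx', hv'r x (Ioo_subset_Icc_self hx)]
      exact hv'b
  -- max point in [α, β]
  obtain ⟨x₀, hx₀mem, hx₀max⟩ := isCompact_Icc.exists_isMaxOn (nonempty_Icc.2 hαβ.le)
    (hvc.mono (Icc_subset_Icc haα hβb))
  have hx₀' : x₀ ∈ Icc a b := Icc_subset_Icc haα hβb hx₀mem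
  have hmax : ∀ y ∈ Icc a b, v y ≤ v x₀ := by
    intro y hy
    rcases le_or_gt y α with h1 | h1
    · exact (hml ⟨hy.1, h1⟩ ⟨haα, le_rfl⟩ h1).trans (hx₀max ⟨le_rfl, hαβ.le⟩)
    rcases le_or_gt y β with h2 | h2
    · exact hx₀max ⟨h1.le, h2⟩
    · exact (hmr ⟨le_rfl, hβb⟩ ⟨h2.le, hy.2⟩ h2.le).trans (hx₀max ⟨hαβ.le, le_rfl⟩)
  have hM0 : 0 ≤ v x₀ := hv0 x₀ hx₀'
  have hM : sSup ((fun y => |v y|) '' Icc a b) = v x₀ := by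
    apply IsGreatest.csSup_eq
    constructor
    · exact ⟨x₀, hx₀', abs_of_nonneg hM0⟩
    · rintro z ⟨y, hy, rfl⟩
      show |v y| ≤ v x₀
      rw [abs_of_nonneg (hv0 y hy)]
      exact hmax y hy
  -- θ facts
  have hθβ : thetaLow h a b ≤ 1 / (β - a) := min_le_left _ _
  have hθα : thetaLow h a b ≤ 1 / (b - α) := min_le_right _ _
  have hθ0 : 0 ≤ thetaLow h a b :=
    le_min (one_div_nonneg.2 (sub_nonneg.2 haβ.le)) (one_div_nonneg.2 (sub_nonneg.2 hαb.le))
  -- conclusion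
  intro x hx
  rw [hM]
  rcases le_total x x₀ with hxx | hxx
  · by_cases h0 : x₀ = a
    · have hxa : x = a := le_antisymm (hxx.trans_eq h0) hx.1
      rw [hxa, hva]
      have : deltaOmega a b a = 0 := by
        rw [deltaOmega, sub_self, min_eq_left (sub_nonneg.2 hab.le)]
      rw [this, mul_zero]
    · have hax₀ : a < x₀ := lt_of_le_of_ne (hx.1.trans hxx) (Ne.symm h0)
      have hpos : (0:ℝ) < x₀ - a := sub_pos.2 hax₀
      have ht : (0:ℝ) ≤ (x₀ - x) / (x₀ - a) := div_nonneg (sub_nonneg.2 hxx) hpos.le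
      have hs : (0:ℝ) ≤ (x - a) / (x₀ - a) := div_nonneg (sub_nonneg.2 hx.1) hpos.le
      have hts : (x₀ - x) / (x₀ - a) + (x - a) / (x₀ - a) = 1 := by field_simp; ring
      have hch := hconc.2 hamem hx₀' ht hs hts
      have hxx' : ((x₀ - x) / (x₀ - a)) • a + ((x - a) / (x₀ - a)) • x₀ = x := by
        simp only [smul_eq_mul]; field_simp; ring
      rw [hxx', hva, smul_eq_mul, smul_eq_mul, mul_zero, zero_add] at hch
      have hδ : deltaOmega a b x ≤ x - a := min_le_left _ _
      have h1 : thetaLow h a b ≤ 1 / (x₀ - a) :=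
        hθβ.trans (one_div_le_one_div_of_le hpos (by linarith [hx₀mem.2]))
      calc thetaLow h a b * v x₀ * deltaOmega a b x
          ≤ thetaLow h a b * v x₀ * (x - a) :=
            mul_le_mul_of_nonneg_left hδ (mul_nonneg hθ0 hM0)
        _ ≤ (1 / (x₀ - a)) * v x₀ * (x - a) :=
            mul_le_mul_of_nonneg_right (mul_le_mul_of_nonneg_right h1 hM0) (sub_nonneg.2 hx.1)
        _ = (x - a) / (x₀ - a) * v x₀ := by ring
        _ ≤ v x := hch
  · by_cases h0 : x₀ = b
    · have hxb : x = b := le_antisymm hx.2 (h0 ▸ hxx)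
      rw [hxb, hvb]
      have : deltaOmega a b b = 0 := by
        rw [deltaOmega, sub_self, min_eq_right (sub_nonneg.2 hab.le)]
      rw [this, mul_zero]
    · have hx₀b : x₀ < b := lt_of_le_of_ne (hxx.trans hx.2) h0
      have hpos : (0:ℝ) < b - x₀ := sub_pos.2 hx₀b
      have ht : (0:ℝ) ≤ (b - x) / (b - x₀) := div_nonneg (sub_nonneg.2 hx.2) hpos.le
      have hs : (0:ℝ) ≤ (x - x₀) / (b - x₀) := div_nonneg (sub_nonneg.2 hxx) hpos.le
      have hts : (b - x) / (b - x₀) + (x - x₀) / (b - x₀) = 1 := by field_simp; ring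
      have hch := hconc.2 hx₀' hbmem ht hs hts
      have hxx' : ((b - x) / (b - x₀)) • x₀ + ((x - x₀) / (b - x₀)) • b = x := by
        simp only [smul_eq_mul]; field_simp; ring
      rw [hxx', hvb, smul_eq_mul, smul_eq_mul, mul_zero, add_zero] at hch
      have hδ : deltaOmega a b x ≤ b - x := min_le_right _ _
      have h1 : thetaLow h a b ≤ 1 / (b - x₀) :=
        hθα.trans (one_div_le_one_div_of_le hpos (by linarith [hx₀mem.1]))
      calc thetaLow h a b * v x₀ * deltaOmega a b x
          ≤ thetaLow h a b * v x₀ * (b - x) :=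
            mul_le_mul_of_nonneg_left hδ (mul_nonneg hθ0 hM0)
        _ ≤ (1 / (b - x₀)) * v x₀ * (b - x) :=
            mul_le_mul_of_nonneg_right (mul_le_mul_of_nonneg_right h1 hM0) (sub_nonneg.2 hx.2)
        _ = (b - x) / (b - x₀) * v x₀ := by ring
        _ ≤ v x := hch
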